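/- arXiv:2503.10206 — 2 statements merged into one kernel-verified Lean document; each statement's English description precedes it below -/
import Mathlib

section
/- Every perfectly k-divisible graph G with clique number ω satisfies χ(G) ≤ C(ω + k - 1, k), where C denotes the binomial coefficient. -/
open SimpleGraph

universe u v

/-- A graph is perfect if every induced subgraph has chromatic number
equal to its clique number. -/
def IsPerfect {V : Type u} (G : SimpleGraph V) : Prop :=
  ∀ s : Set V, (G.induce s).chromaticNumber = ((G.induce s).cliqueNum : ℕ∞)

/-- A set of vertices is stable (independent) if no two of its vertices are adjacent. -/
def IsStableSet {V : Type u} (G : SimpleGraph V) (s : Set V) : Prop :=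
  s.Pairwise fun x y => ¬ G.Adj x y

/-- `PerfectlyDiv k G`: `G` is perfectly `k`-divisible.  A graph is perfectly
`1`-divisible iff it is perfect; for `k ≥ 2`, `G` is perfectly `k`-divisible iff for every
induced subgraph `H` of `G`, either `V(H)` is a stable set or it admits a partition
into `X₁, X₂` with `ω(H[X₁]) < ω(H)` and `H[X₂]` perfectly `(k-1)`-divisible.
(The value at `k = 0` is junk.) -/
def PerfectlyDiv : ℕ → {V : Type u} → SimpleGraph V → Prop
  | 0, _, _ => True
  | 1, _, G => IsPerfect G
  | (k+2), _V, G => ∀ s : Set _V,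
      IsStableSet (G.induce s) Set.univ ∨
      ∃ X1 X2 : Set ↥s, X1 ∩ X2 = ∅ ∧ X1 ∪ X2 = Set.univ ∧
        ((G.induce s).induce X1).cliqueNum < (G.induce s).cliqueNum ∧
        PerfectlyDiv (k+1) ((G.induce s).induce X2)

/-- `G` contains no induced subgraph isomorphic to `H`. -/
def IndFree {V : Type u} {W : Type v} (G : SimpleGraph V) (H : SimpleGraph W) : Prop :=
  ¬ ∃ s : Set V, Nonempty (H ≃g G.induce s)

/-- The stability (independence) number of a graph. -/
noncomputable def indepNum {V : Type u} (G : SimpleGraph V) : ℕ :=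
  sSup {n | ∃ s : Finset V, IsStableSet G ↑s ∧ s.card = n}

section Aux

variable {V : Type u} {W : Type u}

lemma chromaticNumber_eq_of_iso {A : SimpleGraph V} {B : SimpleGraph W} (e : A ≃g B) :
    A.chromaticNumber = B.chromaticNumber :=
  le_antisymm (chromaticNumber_mono_of_hom e.toHom)
    (chromaticNumber_mono_of_hom e.symm.toHom)

lemma isNClique_map_emb {A : SimpleGraph V} {B : SimpleGraph W} (f : A ↪g B) {n : ℕ}
    {s : Finset V} (h : A.IsNClique n s) : B.IsNClique n (s.map f.toEmbedding) := by
  constructor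
  · rintro x hx y hy hne
    simp only [Finset.coe_map, Set.mem_image] at hx hy
    obtain ⟨a, ha, rfl⟩ := hx
    obtain ⟨b, hb, rfl⟩ := hy
    exact f.map_adj_iff.mpr (h.1 ha hb (fun hab => hne (by rw [hab])))
  · rw [Finset.card_map]; exact h.2

lemma cliqueNum_eq_of_iso {A : SimpleGraph V} {B : SimpleGraph W} (e : A ≃g B) :
    A.cliqueNum = B.cliqueNum := by
  unfold SimpleGraph.cliqueNum
  congr 1
  ext n
  constructor
  · rintro ⟨s, hs⟩
    exact ⟨s.map e.toEmbedding.toEmbedding, isNClique_map_emb e.toEmbedding hs⟩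
  · rintro ⟨s, hs⟩
    exact ⟨s.map e.symm.toEmbedding.toEmbedding, isNClique_map_emb e.symm.toEmbedding hs⟩

lemma cliqueNum_bdd [Fintype W] (B : SimpleGraph W) :
    BddAbove {n | ∃ s, B.IsNClique n s} := by
  refine ⟨Fintype.card W, ?_⟩
  rintro y ⟨s, hs⟩
  rw [← hs.2]
  exact Finset.card_le_univ s

lemma cliqueNum_le_of_emb [Fintype W] {A : SimpleGraph V} {B : SimpleGraph W}
    (f : A ↪g B) : A.cliqueNum ≤ B.cliqueNum := by
  refine csSup_le ⟨0, ⟨∅, isNClique_empty.mpr rfl⟩⟩ ?_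
  rintro n ⟨s, hs⟩
  exact le_csSup (cliqueNum_bdd B) ⟨s.map f.toEmbedding, isNClique_map_emb f hs⟩

lemma cliqueNum_induce_le [Fintype V] (G : SimpleGraph V) (s : Set V) :
    (G.induce s).cliqueNum ≤ G.cliqueNum :=
  cliqueNum_le_of_emb (SimpleGraph.Embedding.induce s)

lemma one_le_cliqueNum [Fintype V] [Nonempty V] (G : SimpleGraph V) :
    1 ≤ G.cliqueNum :=
  le_csSup (cliqueNum_bdd G) ⟨{Classical.arbitrary V}, isNClique_singleton.mpr rfl⟩

/-- Restriction of an isomorphism to the preimage of a set. -/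
def induceIsoOfPreimage {A : SimpleGraph V} {B : SimpleGraph W} (e : A ≃g B) (t : Set W) :
    A.induce (⇑e ⁻¹' t) ≃g B.induce t where
  toEquiv := e.toEquiv.subtypeEquiv fun _ => Iff.rfl
  map_rel_iff' := e.map_rel_iff

/-- Restriction of an isomorphism to the image of a set. -/
def induceIsoImage {A : SimpleGraph V} {B : SimpleGraph W} (e : A ≃g B) (s : Set V) :
    A.induce s ≃g B.induce (⇑e '' s) where
  toEquiv := e.toEquiv.subtypeEquiv fun a =>
    (Function.Injective.mem_set_image e.injective).symm
  map_rel_iff' := e.map_rel_iff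

/-- An induced subgraph of an induced subgraph is an induced subgraph. -/
noncomputable def induceInduceIso (G : SimpleGraph V) (s : Set V) (t : Set ↥s) :
    (G.induce s).induce t ≃g G.induce (Subtype.val '' t) where
  toEquiv := Equiv.Set.image Subtype.val t Subtype.val_injective
  map_rel_iff' := Iff.rfl

lemma stable_of_iso {A : SimpleGraph V} {B : SimpleGraph W} (e : A ≃g B)
    (h : IsStableSet B Set.univ) : IsStableSet A Set.univ := by
  intro x _ y _ hxy hadj
  exact h (Set.mem_univ (e x)) (Set.mem_univ (e y))
    (fun hh => hxy (e.injective hh)) (e.map_rel_iff.mpr hadj)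

lemma colorable_one_of_stable {A : SimpleGraph V} (h : IsStableSet A Set.univ) :
    A.Colorable 1 :=
  ⟨SimpleGraph.Coloring.mk (fun _ => (0 : Fin 1))
    (fun {v w} hadj => absurd hadj (h (Set.mem_univ v) (Set.mem_univ w) (A.ne_of_adj hadj)))⟩

lemma colorable_of_union {A : SimpleGraph V} {X1 X2 : Set V} (hu : X1 ∪ X2 = Set.univ)
    {m n : ℕ} (h1 : (A.induce X1).Colorable m) (h2 : (A.induce X2).Colorable n) :
    A.Colorable (m + n) := by
  classical
  obtain ⟨c1⟩ := h1
  obtain ⟨c2⟩ := h2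
  have hmem : ∀ v : V, v ∉ X1 → v ∈ X2 := by
    intro v hv
    have : v ∈ X1 ∪ X2 := by rw [hu]; exact Set.mem_univ v
    exact this.resolve_left hv
  have C : A.Coloring (Fin m ⊕ Fin n) := SimpleGraph.Coloring.mk
    (fun v => if hv : v ∈ X1 then Sum.inl (c1 ⟨v, hv⟩) else Sum.inr (c2 ⟨v, hmem v hv⟩))
    (by
      intro v w hadj
      by_cases hv : v ∈ X1 <;> by_cases hw : w ∈ X1
      · simp only [dif_pos hv, dif_pos hw, ne_eq, Sum.inl.injEq]
        exact c1.valid (by exact hadj)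
      · simp [dif_pos hv, dif_neg hw]
      · simp [dif_neg hv, dif_pos hw]
      · simp only [dif_neg hv, dif_neg hw, ne_eq, Sum.inr.injEq]
        exact c2.valid (by exact hadj))
  simpa using C.colorable

/-- The disjunction appearing in `PerfectlyDiv` transfers along isomorphisms. -/
lemma cond_congr (k : ℕ) {A : SimpleGraph V} {B : SimpleGraph W} (e : A ≃g B)
    (tr : ∀ {V' W' : Type u} {A' : SimpleGraph V'} {B' : SimpleGraph W'},
      (A' ≃g B') → PerfectlyDiv (k+1) B' → PerfectlyDiv (k+1) A')
    (h : IsStableSet B Set.univ ∨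
      ∃ X1 X2 : Set W, X1 ∩ X2 = ∅ ∧ X1 ∪ X2 = Set.univ ∧
        (B.induce X1).cliqueNum < B.cliqueNum ∧ PerfectlyDiv (k+1) (B.induce X2)) :
    IsStableSet A Set.univ ∨
      ∃ X1 X2 : Set V, X1 ∩ X2 = ∅ ∧ X1 ∪ X2 = Set.univ ∧
        (A.induce X1).cliqueNum < A.cliqueNum ∧ PerfectlyDiv (k+1) (A.induce X2) := by
  rcases h with hst | ⟨X1, X2, hd, hu, hlt, hpd⟩
  · exact Or.inl (stable_of_iso e hst)
  · refine Or.inr ⟨⇑e ⁻¹' X1, ⇑e ⁻¹' X2, ?_, ?_, ?_, ?_⟩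
    · rw [← Set.preimage_inter, hd, Set.preimage_empty]
    · rw [← Set.preimage_union, hu, Set.preimage_univ]
    · rw [cliqueNum_eq_of_iso (induceIsoOfPreimage e X1), cliqueNum_eq_of_iso e]
      exact hlt
    · exact tr (induceIsoOfPreimage e X2) hpd

lemma perfectlyDiv_congr : ∀ (k : ℕ) {V W : Type u} {A : SimpleGraph V} {B : SimpleGraph W},
    (A ≃g B) → PerfectlyDiv k B → PerfectlyDiv k A
  | 0, _, _, _, _, _, _ => trivial
  | 1, _, _, A, B, e, h => by
    intro s
    have e2 : A.induce s ≃g B.induce (⇑e '' s) := induceIsoImage e s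
    rw [chromaticNumber_eq_of_iso e2, cliqueNum_eq_of_iso e2]
    exact h _
  | (k+2), _, _, A, B, e, h => by
    intro s
    exact cond_congr k (induceIsoImage e s)
      (fun e' h' => perfectlyDiv_congr (k+1) e' h') (h (⇑e '' s))

lemma perfectlyDiv_induce : ∀ (k : ℕ) {V : Type u} (G : SimpleGraph V) (s : Set V),
    PerfectlyDiv k G → PerfectlyDiv k (G.induce s)
  | 0, _, _, _, _ => trivial
  | 1, _, G, s, h => by
    intro t
    have e2 := induceInduceIso G s t
    rw [chromaticNumber_eq_of_iso e2, cliqueNum_eq_of_iso e2]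
    exact h _
  | (k+2), _, G, s, h => by
    intro t
    exact cond_congr k (induceInduceIso G s t)
      (fun e' h' => perfectlyDiv_congr (k+1) e' h') (h (Subtype.val '' t))

lemma main_bound (k n : ℕ) {V : Type u} [Fintype V] (G : SimpleGraph V)
    (h : PerfectlyDiv (k+1) G) (hω : G.cliqueNum ≤ n) :
    G.Colorable ((n + k).choose (k+1)) := by
  classical
  match k with
  | 0 =>
    have hp : IsPerfect G := h
    have hchi : G.chromaticNumber = (G.cliqueNum : ℕ∞) := by
      rw [← chromaticNumber_eq_of_iso (induceUnivIso G),
        ← cliqueNum_eq_of_iso (induceUnivIso G)]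
      exact hp Set.univ
    have : G.Colorable n := by
      rw [← chromaticNumber_le_iff_colorable, hchi]
      exact_mod_cast hω
    simpa [Nat.choose_one_right] using this
  | k+1 =>
    rcases (h : PerfectlyDiv (k+2) G) Set.univ with hst | ⟨X1, X2, hd, hu, hlt, hpd⟩
    · have hstG : IsStableSet G Set.univ := stable_of_iso (induceUnivIso G).symm hst
      cases isEmpty_or_nonempty V with
      | inl hE => exact SimpleGraph.Colorable.of_isEmpty (G := G) _
      | inr hne =>
        have h1 : 1 ≤ n := le_trans (one_le_cliqueNum G) hω
        exact (colorable_one_of_stable hstG).mono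
          (Nat.succ_le_of_lt (Nat.choose_pos (by omega)))
    · have hωU : (G.induce (Set.univ : Set V)).cliqueNum = G.cliqueNum :=
        cliqueNum_eq_of_iso (induceUnivIso G)
      obtain ⟨m, rfl⟩ : ∃ m, n = m + 1 := by
        cases n with
        | zero => omega
        | succ m => exact ⟨m, rfl⟩
      haveI : Fintype ↥(Set.univ : Set V) := Set.fintypeUniv
      haveI : Fintype ↥X1 := Fintype.ofFinite _
      haveI : Fintype ↥X2 := Fintype.ofFinite _
      have hpd1 : PerfectlyDiv (k+2) ((G.induce (Set.univ : Set V)).induce X1) :=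
        perfectlyDiv_induce (k+2) _ X1 (perfectlyDiv_induce (k+2) G Set.univ h)
      have hω1 : ((G.induce (Set.univ : Set V)).induce X1).cliqueNum ≤ m := by omega
      have c1 := main_bound (k+1) m _ hpd1 hω1
      have hω2 : ((G.induce (Set.univ : Set V)).induce X2).cliqueNum ≤ m + 1 :=
        le_trans (cliqueNum_induce_le _ X2) (by omega)
      have c2 := main_bound k (m+1) _ hpd hω2
      have cU := colorable_of_union hu c1 c2
      have cG : G.Colorable ((m + (k+1)).choose (k+1+1) + ((m+1) + k).choose (k+1)) :=
        Colorable.of_hom (induceUnivIso G).symm.toHom cU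
      have harith : ((m+1) + (k+1)).choose (k+1+1)
          = (m + (k+1)).choose (k+1+1) + ((m+1) + k).choose (k+1) := by
        have := Nat.choose_succ_succ (m + k + 1) (k + 1)
        have e1 : (m+1) + (k+1) = (m + k + 1) + 1 := by omega
        have e2 : m + (k+1) = m + k + 1 := by omega
        have e3 : (m+1) + k = m + k + 1 := by omega
        rw [e1, e2, e3, this, Nat.add_comm]
      rw [harith]
      exact cG
termination_by (k, n)

end Aux

theorem stmt_0 {V : Type u} [Fintype V] (G : SimpleGraph V) (k : ℕ) (hk : 1 ≤ k)
    (hG : PerfectlyDiv k G) :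
    G.chromaticNumber ≤ ((G.cliqueNum + k - 1).choose k : ℕ∞) := by
  obtain ⟨j, rfl⟩ : ∃ j, k = j + 1 := ⟨k - 1, by omega⟩
  have hc : G.Colorable ((G.cliqueNum + j).choose (j+1)) :=
    main_bound j G.cliqueNum G hG le_rfl
  have he : G.cliqueNum + (j + 1) - 1 = G.cliqueNum + j := by omega
  rw [he]
  exact chromaticNumber_le_iff_colorable.mpr hc
end

section
/- Every finite graph G with clique number ω and stability number α satisfies χ(G) ≤ C(ω + α - 1, α), where C denotes the binomial coefficient. -/
open SimpleGraph

universe u v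

lemma indepNum_bddAbove {V : Type u} [Fintype V] (G : SimpleGraph V) :
    BddAbove {n | ∃ s : Finset V, IsStableSet G ↑s ∧ s.card = n} := by
  refine ⟨Fintype.card V, ?_⟩
  rintro n ⟨s, -, rfl⟩
  exact s.card_le_univ

lemma card_le_indepNum {V : Type u} [Fintype V] {G : SimpleGraph V} {s : Finset V}
    (h : IsStableSet G ↑s) : s.card ≤ _root_.indepNum G :=
  le_csSup (indepNum_bddAbove G) ⟨s, h, rfl⟩

lemma exists_indepNum {V : Type u} [Fintype V] (G : SimpleGraph V) :
    ∃ s : Finset V, IsStableSet G ↑s ∧ s.card = _root_.indepNum G :=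
  Nat.sSup_mem ⟨0, by exact ⟨∅, by simp [IsStableSet], by simp⟩⟩ (indepNum_bddAbove G)

lemma induce_adj' {V : Type u} {G : SimpleGraph V} {s : Set V} {x y : ↥s} :
    (G.induce s).Adj x y ↔ G.Adj ↑x ↑y := by
  simp [comap_adj]

lemma stable_image {V : Type u} [DecidableEq V] {G : SimpleGraph V} {s : Set V} {t : Finset ↥s}
    (h : IsStableSet (G.induce s) ↑t) : IsStableSet G ↑(t.image Subtype.val) := by
  rintro x hx y hy hxy hadj
  simp only [Finset.coe_image, Set.mem_image, Finset.mem_coe] at hx hy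
  obtain ⟨x', hx', rfl⟩ := hx
  obtain ⟨y', hy', rfl⟩ := hy
  exact h hx' hy' (fun e => hxy (congrArg Subtype.val e)) (induce_adj'.mpr hadj)

lemma clique_image {V : Type u} [DecidableEq V] {G : SimpleGraph V} {s : Set V} {t : Finset ↥s}
    (h : (G.induce s).IsClique ↑t) : G.IsClique ↑(t.image Subtype.val) := by
  rintro x hx y hy hxy
  simp only [Finset.coe_image, Set.mem_image, Finset.mem_coe] at hx hy
  obtain ⟨x', hx', rfl⟩ := hx
  obtain ⟨y', hy', rfl⟩ := hy
  exact induce_adj'.mp (h hx' hy' (fun e => hxy (congrArg Subtype.val e)))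

lemma key : ∀ n : ℕ, ∀ {V : Type u} [Fintype V] (G : SimpleGraph V), Fintype.card V ≤ n →
    ∀ w a : ℕ, G.cliqueNum ≤ w → _root_.indepNum G ≤ a → G.Colorable ((w + a - 1).choose a) := by
  intro n
  induction n with
  | zero =>
    intro V _ G hcard w a _ _
    haveI : IsEmpty V := Fintype.card_eq_zero_iff.mp (Nat.le_zero.mp hcard)
    exact ⟨Coloring.mk isEmptyElim (fun {v} => isEmptyElim v)⟩
  | succ n ih =>
    intro V _ G hcard w a hw ha
    classical
    by_cases hV : IsEmpty V
    · exact ⟨Coloring.mk isEmptyElim (fun {v} => isEmptyElim v)⟩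
    rw [not_isEmpty_iff] at hV
    obtain ⟨v⟩ := hV
    -- w ≥ 1 and a ≥ 1
    have hw1 : 1 ≤ w := le_trans (by
      have : ({v} : Finset V).card ≤ G.cliqueNum :=
        IsClique.card_le_cliqueNum (tc := by simp)
      simpa using this) hw
    have ha1 : 1 ≤ a := le_trans (by
      have : ({v} : Finset V).card ≤ _root_.indepNum G :=
        card_le_indepNum (by simp [IsStableSet])
      simpa using this) ha
    obtain ⟨w', rfl⟩ : ∃ w', w = w' + 1 := ⟨w - 1, by omega⟩
    obtain ⟨a', rfl⟩ : ∃ a', a = a' + 1 := ⟨a - 1, by omega⟩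
    set N : Set V := {u | G.Adj v u} with hN
    set M : Set V := {u | u ≠ v ∧ ¬ G.Adj v u} with hM
    haveI : Fintype ↥N := Fintype.ofFinite _
    haveI : Fintype ↥M := Fintype.ofFinite _
    have hNcard : Fintype.card ↥N ≤ n := by
      have : Fintype.card ↥N < Fintype.card V := by
        refine Fintype.card_lt_of_injective_of_notMem Subtype.val Subtype.val_injective
          (b := v) ?_
        rw [Subtype.range_val]
        exact fun h => G.irrefl h
      omega
    have hMcard : Fintype.card ↥M ≤ n := by
      have : Fintype.card ↥M < Fintype.card V := by
        refine Fintype.card_lt_of_injective_of_notMem Subtype.val Subtype.val_injective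
          (b := v) ?_
        rw [Subtype.range_val]
        exact fun h => h.1 rfl
      omega
    -- clique number of induced on N
    have hNclique : (G.induce N).cliqueNum ≤ w' := by
      obtain ⟨t, ht⟩ := (G.induce N).exists_isNClique_cliqueNum
      have hvim : v ∉ t.image Subtype.val := by
        simp only [Finset.mem_image, not_exists, not_and]
        rintro ⟨x, hx⟩ - e
        have e' : x = v := e
        exact G.irrefl (e' ▸ hx)
      have hcl : G.IsClique ↑(insert v (t.image Subtype.val)) := by
        rw [Finset.coe_insert]
        refine Set.Pairwise.insert (clique_image ht.isClique) ?_
        rintro y hy -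
        simp only [Finset.coe_image, Set.mem_image, Finset.mem_coe] at hy
        obtain ⟨⟨y', hy'⟩, -, rfl⟩ := hy
        exact ⟨hy', (G.adj_symm hy')⟩
      have hcard' : (insert v (t.image Subtype.val)).card = (G.induce N).cliqueNum + 1 := by
        rw [Finset.card_insert_of_notMem hvim,
          Finset.card_image_of_injective _ Subtype.val_injective, ht.card_eq]
      have := IsClique.card_le_cliqueNum (tc := hcl)
      omega
    have hNindep : _root_.indepNum (G.induce N) ≤ a' + 1 := by
      obtain ⟨t, ht, htc⟩ := exists_indepNum (G.induce N)
      have := card_le_indepNum (stable_image ht)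
      rw [Finset.card_image_of_injective _ Subtype.val_injective] at this
      omega
    have hMclique : (G.induce M).cliqueNum ≤ w' + 1 := by
      obtain ⟨t, ht⟩ := (G.induce M).exists_isNClique_cliqueNum
      have := IsClique.card_le_cliqueNum (tc := clique_image ht.isClique)
      rw [Finset.card_image_of_injective _ Subtype.val_injective, ht.card_eq] at this
      omega
    have hMindep : _root_.indepNum (G.induce M) ≤ a' := by
      obtain ⟨t, ht, htc⟩ := exists_indepNum (G.induce M)
      have hvim : v ∉ t.image Subtype.val := by
        simp only [Finset.mem_image, not_exists, not_and]
        rintro ⟨x, hx⟩ - e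
        exact hx.1 e
      have hst : IsStableSet G ↑(insert v (t.image Subtype.val)) := by
        rw [Finset.coe_insert]
        refine Set.Pairwise.insert (stable_image ht) ?_
        rintro y hy -
        simp only [Finset.coe_image, Set.mem_image, Finset.mem_coe] at hy
        obtain ⟨⟨y', hy'⟩, -, rfl⟩ := hy
        exact ⟨fun h => hy'.2 h, fun h => hy'.2 (G.adj_symm h)⟩
      have := card_le_indepNum hst
      rw [Finset.card_insert_of_notMem hvim,
        Finset.card_image_of_injective _ Subtype.val_injective, htc] at this
      omega
    obtain ⟨f⟩ := ih (G.induce N) hNcard w' (a' + 1) hNclique hNindep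
    have e1 : w' + (a' + 1) - 1 = w' + a' := by omega
    rw [e1] at f
    set k1 := (w' + a').choose (a' + 1) with hk1
    set k2 := (w' + a').choose a' with hk2
    have etarget : (w' + 1 + (a' + 1) - 1).choose (a' + 1) = k2 + k1 := by
      have : w' + 1 + (a' + 1) - 1 = (w' + a') + 1 := by omega
      rw [this, Nat.choose_succ_succ]
    rw [etarget]
    by_cases hMne : M.Nonempty
    · obtain ⟨g⟩ := ih (G.induce M) hMcard (w' + 1) a' hMclique hMindep
      have e2 : w' + 1 + a' - 1 = w' + a' := by omega
      rw [e2] at g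
      obtain ⟨m0, hm0⟩ := hMne
      have C : G.Coloring (Fin k1 ⊕ Fin k2) := by
        refine Coloring.mk (fun u =>
          if h : u ∈ N then Sum.inl (f ⟨u, h⟩)
          else if h' : u ∈ M then Sum.inr (g ⟨u, h'⟩)
          else Sum.inr (g ⟨m0, hm0⟩)) ?_
        intro x y hadj
        have hxy : x ≠ y := G.ne_of_adj hadj
        have huv : ∀ u : V, u ∉ N → u ∉ M → u = v := by
          intro u h1 h2
          by_contra h3
          exact h2 ⟨h3, fun h4 => h1 h4⟩
        by_cases hx : x ∈ N <;> by_cases hy : y ∈ N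
        · simp only [hx, hy, dif_pos]
          intro e
          exact f.valid ((induce_adj' (x := ⟨x, hx⟩) (y := ⟨y, hy⟩)).mpr hadj) (Sum.inl_injective e)
        · by_cases hy' : y ∈ M
          · simp [hx, hy, hy']
          · simp [hx, hy, hy']
        · by_cases hx' : x ∈ M
          · simp [hx, hy, hx']
          · simp [hx, hy, hx']
        · by_cases hx' : x ∈ M <;> by_cases hy' : y ∈ M
          · simp only [hx, hy, hx', hy', dif_neg, dif_pos, not_false_iff]
            intro e
            exact g.valid ((induce_adj' (x := ⟨x, hx'⟩) (y := ⟨y, hy'⟩)).mpr hadj) (Sum.inr_injective e)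
          · -- y = v, x ∈ M, adjacency x v contradicts x ∈ M
            exact absurd (huv y hy hy' ▸ hadj) (fun h => hx'.2 (G.adj_symm h))
          · exact absurd (huv x hx hx' ▸ hadj) (fun h => hy'.2 h)
          · exact absurd rfl (huv x hx hx' ▸ huv y hy hy' ▸ hxy)
        
      have := C.colorable
      rwa [Fintype.card_sum, Fintype.card_fin, Fintype.card_fin, Nat.add_comm] at this
    · -- M empty: all u ≠ v are in N
      have hall : ∀ u : V, u ≠ v → u ∈ N := by
        intro u hu
        by_contra h
        exact hMne ⟨u, hu, fun h' => h h'⟩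
      have C : G.Coloring (Fin (k1 + 1)) := by
        refine Coloring.mk (fun u =>
          if h : u ∈ N then (f ⟨u, h⟩).castSucc else Fin.last k1) ?_
        intro x y hadj
        have hxy : x ≠ y := G.ne_of_adj hadj
        by_cases hx : x ∈ N <;> by_cases hy : y ∈ N
        · simp only [hx, hy, dif_pos]
          intro e
          exact f.valid ((induce_adj' (x := ⟨x, hx⟩) (y := ⟨y, hy⟩)).mpr hadj) (Fin.castSucc_injective _ e)
        · simp only [hx, hy, dif_pos, dif_neg, not_false_iff]
          exact Fin.ne_of_lt (Fin.castSucc_lt_last _)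
        · simp only [hx, hy, dif_pos, dif_neg, not_false_iff]
          exact (Fin.ne_of_lt (Fin.castSucc_lt_last _)).symm
        · exact absurd rfl ((by_contra fun h => hy (hall y h) : y = v) ▸
            (by_contra fun h => hx (hall x h) : x = v) ▸ hxy)
      have hle : k1 + 1 ≤ k2 + k1 := by
        have : 1 ≤ k2 := Nat.one_le_iff_ne_zero.mpr (by
          rw [hk2]
          exact Nat.pos_iff_ne_zero.mp (Nat.choose_pos (by omega)))
        omega
      have := C.colorable
      rw [Fintype.card_fin] at this
      exact this.mono hle

theorem stmt_5 {V : Type u} [Fintype V] (G : SimpleGraph V) :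
    G.chromaticNumber ≤ ((G.cliqueNum + _root_.indepNum G - 1).choose (_root_.indepNum G) : ℕ∞) := by
  rw [chromaticNumber_le_iff_colorable]
  exact key (Fintype.card V) G le_rfl _ _ le_rfl le_rfl
end
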